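/- Let a0,...,a7 be real numbers with f1 ≠ 0, f4 > 0, f2i ≠ 0 (i=1,2,3), and suppose (v, e, q, n) is a real solution of the MMR system with n = f1. Then e_i ≠ q_i for every i ∈ {1,2,3}, provided f22·f23 ≠ 0, f21·f23 ≠ 0, and f21·f22 ≠ 0 respectively. -/
import Mathlib


theorem e_ne_q (a0 a1 a2 a3 a4 a5 a6 a7 : ℝ)
    (hf1 : (a0+a1+a2+a3+a4+a5+a6+a7) ≠ 0)
    (hf4 : 0 < ((a0^2*a7^2 + a3^2*a4^2 + a5^2*a2^2 + a6^2*a1^2) + 4*(a0*a3*a5*a6 + a7*a4*a2*a1) - 2*(a0*a7*a3*a4 + a0*a7*a5*a2 + a0*a7*a6*a1 + a3*a4*a5*a2 + a3*a4*a6*a1 + a5*a2*a6*a1)))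
    (h21 : ((a0+a4)*(a7+a3) - (a1+a5)*(a6+a2)) ≠ 0) (h22 : ((a0+a2)*(a7+a5) - (a4+a6)*(a3+a1)) ≠ 0) (h23 : ((a0+a1)*(a7+a6) - (a2+a3)*(a5+a4)) ≠ 0)
    (v e1 e2 e3 q1 q2 q3 : ℝ)
    (h0 : a0 = (a0+a1+a2+a3+a4+a5+a6+a7)*(v*(1-q1)*(1-q2)*(1-q3) + (1-v)*(1-e1)*(1-e2)*(1-e3)))
    (h1 : a1 = (a0+a1+a2+a3+a4+a5+a6+a7)*(v*(1-q1)*(1-q2)*q3 + (1-v)*(1-e1)*(1-e2)*e3))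
    (h2 : a2 = (a0+a1+a2+a3+a4+a5+a6+a7)*(v*(1-q1)*q2*(1-q3) + (1-v)*(1-e1)*e2*(1-e3)))
    (h3 : a3 = (a0+a1+a2+a3+a4+a5+a6+a7)*(v*(1-q1)*q2*q3 + (1-v)*(1-e1)*e2*e3))
    (h4 : a4 = (a0+a1+a2+a3+a4+a5+a6+a7)*(v*q1*(1-q2)*(1-q3) + (1-v)*e1*(1-e2)*(1-e3)))
    (h5 : a5 = (a0+a1+a2+a3+a4+a5+a6+a7)*(v*q1*(1-q2)*q3 + (1-v)*e1*(1-e2)*e3))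
    (h6 : a6 = (a0+a1+a2+a3+a4+a5+a6+a7)*(v*q1*q2*(1-q3) + (1-v)*e1*e2*(1-e3)))
    (h7 : a7 = (a0+a1+a2+a3+a4+a5+a6+a7)*(v*q1*q2*q3 + (1-v)*e1*e2*e3)) :
    (((a0+a2)*(a7+a5) - (a4+a6)*(a3+a1)) * ((a0+a1)*(a7+a6) - (a2+a3)*(a5+a4)) ≠ 0 → e1 ≠ q1) ∧
    (((a0+a4)*(a7+a3) - (a1+a5)*(a6+a2)) * ((a0+a1)*(a7+a6) - (a2+a3)*(a5+a4)) ≠ 0 → e2 ≠ q2) ∧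
    (((a0+a4)*(a7+a3) - (a1+a5)*(a6+a2)) * ((a0+a2)*(a7+a5) - (a4+a6)*(a3+a1)) ≠ 0 → e3 ≠ q3) := by
  refine ⟨?_, ?_, ?_⟩
  · intro hne heq
    apply hne
    subst heq
    have hA : a0+a2 = (a0+a1+a2+a3+a4+a5+a6+a7)*((1-e1)*(v*(1-q3)+(1-v)*(1-e3))) := by
      linear_combination h0 + h2
    have hB : a7+a5 = (a0+a1+a2+a3+a4+a5+a6+a7)*(e1*(v*q3+(1-v)*e3)) := by
      linear_combination h7 + h5
    have hC : a4+a6 = (a0+a1+a2+a3+a4+a5+a6+a7)*(e1*(v*(1-q3)+(1-v)*(1-e3))) := by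
      linear_combination h4 + h6
    have hD : a3+a1 = (a0+a1+a2+a3+a4+a5+a6+a7)*((1-e1)*(v*q3+(1-v)*e3)) := by
      linear_combination h3 + h1
    rw [hA, hB, hC, hD]; ring
  · intro hne heq
    apply hne
    subst heq
    have hA : a0+a4 = (a0+a1+a2+a3+a4+a5+a6+a7)*((1-e2)*(v*(1-q3)+(1-v)*(1-e3))) := by
      linear_combination h0 + h4
    have hB : a7+a3 = (a0+a1+a2+a3+a4+a5+a6+a7)*(e2*(v*q3+(1-v)*e3)) := by
      linear_combination h7 + h3
    have hC : a1+a5 = (a0+a1+a2+a3+a4+a5+a6+a7)*((1-e2)*(v*q3+(1-v)*e3)) := by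
      linear_combination h1 + h5
    have hD : a6+a2 = (a0+a1+a2+a3+a4+a5+a6+a7)*(e2*(v*(1-q3)+(1-v)*(1-e3))) := by
      linear_combination h6 + h2
    rw [hA, hB, hC, hD]; ring
  · intro hne heq
    apply hne
    subst heq
    have hA : a0+a2 = (a0+a1+a2+a3+a4+a5+a6+a7)*((1-e3)*(v*(1-q1)+(1-v)*(1-e1))) := by
      linear_combination h0 + h2
    have hB : a7+a5 = (a0+a1+a2+a3+a4+a5+a6+a7)*(e3*(v*q1+(1-v)*e1)) := by
      linear_combination h7 + h5
    have hC : a4+a6 = (a0+a1+a2+a3+a4+a5+a6+a7)*((1-e3)*(v*q1+(1-v)*e1)) := by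
      linear_combination h4 + h6
    have hD : a3+a1 = (a0+a1+a2+a3+a4+a5+a6+a7)*(e3*(v*(1-q1)+(1-v)*(1-e1))) := by
      linear_combination h3 + h1
    rw [hA, hB, hC, hD]; ring
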